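/- Let E ⊆ M^+(X) be a Borel set (with respect to τ_b). Then Ct(E) ≤ AM(E). -/

import Mathlib

open MeasureTheory Filter Topology BoundedContinuousFunction ENNReal NNReal

noncomputable section

namespace AMPaper

variable (X : Type*) [TopologicalSpace X] [MeasurableSpace X]

/-- The topology `τ_b` on the space of finite nonnegative Borel measures:
the weak topology induced by the pairings `μ ↦ ∫ g dμ`, `g ∈ C_b(X)`. -/
def taub : TopologicalSpace (FiniteMeasure X) :=
  ⨅ g : X →ᵇ ℝ,
    TopologicalSpace.induced (fun μ : FiniteMeasure X => ∫ x, g x ∂(μ : Measure X)) inferInstance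

/-- The topology `τ_A` induced by the pairings with functions from `A ⊆ C_b(X)`. -/
def tauA (A : Set (X →ᵇ ℝ)) : TopologicalSpace (FiniteMeasure X) :=
  ⨅ g ∈ A,
    TopologicalSpace.induced (fun μ : FiniteMeasure X => ∫ x, g x ∂(μ : Measure X)) inferInstance

variable {X}

/-- A closed linear sublattice of `C_b(X)`. -/
structure IsClosedSublattice (A : Set (X →ᵇ ℝ)) : Prop where
  isClosed : IsClosed A
  zero_mem : (0 : X →ᵇ ℝ) ∈ A
  add_mem : ∀ ⦃f g : X →ᵇ ℝ⦄, f ∈ A → g ∈ A → f + g ∈ A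
  smul_mem : ∀ (c : ℝ) ⦃f : X →ᵇ ℝ⦄, f ∈ A → c • f ∈ A
  sup_mem : ∀ ⦃f g h : X →ᵇ ℝ⦄, f ∈ A → g ∈ A → (∀ x, h x = max (f x) (g x)) → h ∈ A
  inf_mem : ∀ ⦃f g h : X →ᵇ ℝ⦄, f ∈ A → g ∈ A → (∀ x, h x = min (f x) (g x)) → h ∈ A

/-- An acceptable subspace of `C_b(X)`: a closed linear sublattice satisfying
the separation property (A2). -/
structure IsAcceptable (A : Set (X →ᵇ ℝ)) extends IsClosedSublattice A : Prop where
  sep : ∀ F : Set X, IsClosed F → ∀ x ∉ F, ∃ g ∈ A,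
    (∀ y, 0 ≤ g y) ∧ (∀ y, g y ≤ 1) ∧ g x = 1 ∧ ∀ y ∈ F, g y = 0

/-- A lower semicontinuous `ρ : X → [0,∞]` is admissible for `E` if `∫ ρ dμ ≥ 1` for all `μ ∈ E`. -/
def AdmissibleFun (ρ : X → ℝ≥0∞) (E : Set (FiniteMeasure X)) : Prop :=
  LowerSemicontinuous ρ ∧ ∀ μ ∈ E, 1 ≤ ∫⁻ x, ρ x ∂(μ : Measure X)

/-- The `M_p` modulus of a family of measures. -/
def Mmod (p : ℝ) (m : Measure X) (E : Set (FiniteMeasure X)) : ℝ≥0∞ :=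
  ⨅ (ρ : X → ℝ≥0∞) (_ : AdmissibleFun ρ E), ∫⁻ x, ρ x ^ p ∂m

/-- The continuous modulus `M_{p,c}^A`, with test functions nonnegative elements of `A`. -/
def McMod (p : ℝ) (A : Set (X →ᵇ ℝ)) (m : Measure X) (E : Set (FiniteMeasure X)) : ℝ≥0∞ :=
  ⨅ (g : X →ᵇ ℝ) (_ : g ∈ A ∧ (∀ x, 0 ≤ g x) ∧
      ∀ μ ∈ E, 1 ≤ ∫⁻ x, ENNReal.ofReal (g x) ∂(μ : Measure X)),
    ∫⁻ x, ENNReal.ofReal (g x) ^ p ∂m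

/-- A sequence of lower semicontinuous functions `ρ_j : X → [0,∞]` is an admissible sequence
for `E` if `liminf_j ∫ ρ_j dμ ≥ 1` for all `μ ∈ E`. -/
def AdmissibleSeq (ρ : ℕ → X → ℝ≥0∞) (E : Set (FiniteMeasure X)) : Prop :=
  (∀ j, LowerSemicontinuous (ρ j)) ∧
    ∀ μ ∈ E, 1 ≤ Filter.liminf (fun j => ∫⁻ x, ρ j x ∂(μ : Measure X)) Filter.atTop

/-- The approximation modulus `AM_p` of a family of measures. -/
def AMmod (p : ℝ) (m : Measure X) (E : Set (FiniteMeasure X)) : ℝ≥0∞ :=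
  ⨅ (ρ : ℕ → X → ℝ≥0∞) (_ : AdmissibleSeq ρ E),
    Filter.liminf (fun j => ∫⁻ x, ρ j x ^ p ∂m) Filter.atTop

/-- The continuous approximation modulus `AM_{p,c}^A`. -/
def AMcMod (p : ℝ) (A : Set (X →ᵇ ℝ)) (m : Measure X) (E : Set (FiniteMeasure X)) : ℝ≥0∞ :=
  ⨅ (g : ℕ → X →ᵇ ℝ) (_ : (∀ j, g j ∈ A ∧ ∀ x, 0 ≤ g j x) ∧
      ∀ μ ∈ E, 1 ≤ Filter.liminf
        (fun j => ∫⁻ x, ENNReal.ofReal (g j x) ∂(μ : Measure X)) Filter.atTop),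
    Filter.liminf (fun j => ∫⁻ x, ENNReal.ofReal (g j x) ^ p ∂m) Filter.atTop

/-- The `L^q(m)`-norm of a function `f : X → [0,∞]`. -/
def lqNorm (q : ℝ≥0∞) (m : Measure X) (f : X → ℝ≥0∞) : ℝ≥0∞ :=
  if q = ∞ then essSup f m else (∫⁻ x, f x ^ q.toReal ∂m) ^ (1 / q.toReal)

variable (X) in
/-- The `p`-content (depending on `p` only through the conjugate exponent `q`):
the supremum of the outer measures `η*(E)` over all plans `η` — finite Borel measures on
`(M^+(X), τ_b)` — whose barycenter `η^#` is absolutely continuous w.r.t. `m` with density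
of `L^q(m)`-norm at most `1`. -/
def Ct (q : ℝ≥0∞) (m : Measure X) (E : Set (FiniteMeasure X)) : ℝ≥0∞ :=
  ⨆ (η : @Measure (FiniteMeasure X) (@borel (FiniteMeasure X) (taub X)))
    (_ : η Set.univ < ∞ ∧ ∃ f : X → ℝ≥0∞, Measurable f ∧
      (∀ B : Set X, MeasurableSet B → (∫⁻ μ, (μ : Measure X) B ∂η) = ∫⁻ x in B, f x ∂m) ∧
      lqNorm q m f ≤ 1),
    η E


section Aux18

variable {X : Type*} [MetricSpace X] [MeasurableSpace X] [BorelSpace X]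

/-- Pairing with a bounded continuous function is continuous w.r.t. `taub`, hence
Borel measurable. -/
lemma measurable_pairing (g : X →ᵇ ℝ) :
    Measurable[@borel (FiniteMeasure X) (taub X)]
      (fun μ : FiniteMeasure X => ∫ x, g x ∂(μ : Measure X)) := by
  letI : TopologicalSpace (FiniteMeasure X) := taub X
  letI : MeasurableSpace (FiniteMeasure X) := borel (FiniteMeasure X)
  haveI : BorelSpace (FiniteMeasure X) := ⟨rfl⟩
  have hc : Continuous[taub X, inferInstance]
      (fun μ : FiniteMeasure X => ∫ x, g x ∂(μ : Measure X)) := by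
    rw [taub]
    exact continuous_iInf_dom (i := g) continuous_induced_dom
  exact hc.measurable

lemma measurable_lpairing (g : X →ᵇ ℝ) (hg : ∀ x, 0 ≤ g x) :
    Measurable[@borel (FiniteMeasure X) (taub X)]
      (fun μ : FiniteMeasure X => ∫⁻ x, ENNReal.ofReal (g x) ∂(μ : Measure X)) := by
  have : (fun μ : FiniteMeasure X => ∫⁻ x, ENNReal.ofReal (g x) ∂(μ : Measure X))
      = fun μ : FiniteMeasure X => ENNReal.ofReal (∫ x, g x ∂(μ : Measure X)) := by
    funext μ
    exact (ofReal_integral_eq_lintegral_ofReal (g.integrable _)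
      (Filter.Eventually.of_forall hg)).symm
  rw [this]
  exact ENNReal.measurable_ofReal.comp (measurable_pairing g)

/-- The bounded continuous function `x ↦ min 1 (n * dist(x, F))`. -/
def distBCF (F : Set X) (n : ℕ) : X →ᵇ ℝ :=
  BoundedContinuousFunction.mkOfBound
    ⟨fun x => min 1 ((n : ℝ) * Metric.infDist x F),
      continuous_const.min (continuous_const.mul (Metric.continuous_infDist_pt F))⟩ 1
    (fun x y => Real.dist_le_of_mem_Icc_01
      ⟨le_min zero_le_one (mul_nonneg (Nat.cast_nonneg n) Metric.infDist_nonneg), min_le_left _ _⟩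
      ⟨le_min zero_le_one (mul_nonneg (Nat.cast_nonneg n) Metric.infDist_nonneg), min_le_left _ _⟩)

lemma distBCF_apply (F : Set X) (n : ℕ) (x : X) :
    distBCF F n x = min 1 ((n : ℝ) * Metric.infDist x F) := rfl

lemma distBCF_nonneg (F : Set X) (n : ℕ) (x : X) : 0 ≤ distBCF F n x :=
  le_min zero_le_one (mul_nonneg (Nat.cast_nonneg n) Metric.infDist_nonneg)

/-- For an open set `U`, evaluation `μ ↦ μ U` is Borel measurable w.r.t. `taub`. -/
lemma measurable_eval_open {U : Set X} (hU : IsOpen U) :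
    Measurable[@borel (FiniteMeasure X) (taub X)]
      (fun μ : FiniteMeasure X => (μ : Measure X) U) := by
  rcases Set.eq_empty_or_nonempty Uᶜ with hF | hF
  · -- U = univ
    have hU' : U = Set.univ := by
      rw [← Set.compl_empty, ← hF, compl_compl]
    subst hU'
    have : (fun μ : FiniteMeasure X => (μ : Measure X) Set.univ)
        = fun μ : FiniteMeasure X =>
            ENNReal.ofReal (∫ x, (1 : X →ᵇ ℝ) x ∂(μ : Measure X)) := by
      funext μ
      simp only [BoundedContinuousFunction.coe_one, Pi.one_apply]
      rw [integral_const, smul_eq_mul, mul_one, measureReal_def,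
        ENNReal.ofReal_toReal (measure_ne_top _ _)]
    rw [this]
    exact ENNReal.measurable_ofReal.comp (measurable_pairing 1)
  · have hFc : IsClosed Uᶜ := hU.isClosed_compl
    have hmono : Monotone (fun n : ℕ => fun x : X => ENNReal.ofReal (distBCF Uᶜ n x)) := by
      intro n k hnk x
      refine ENNReal.ofReal_le_ofReal ?_
      simp only [distBCF_apply]
      exact min_le_min le_rfl
        (mul_le_mul_of_nonneg_right (Nat.cast_le.2 hnk) Metric.infDist_nonneg)
    have hptw : ∀ x : X, (⨆ n : ℕ, ENNReal.ofReal (distBCF Uᶜ n x))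
        = Set.indicator U (fun _ => (1 : ℝ≥0∞)) x := by
      intro x
      by_cases hx : x ∈ U
      · rw [Set.indicator_of_mem hx]
        have hxF : x ∉ Uᶜ := by simpa using hx
        have hd : 0 < Metric.infDist x Uᶜ := (hFc.notMem_iff_infDist_pos hF).1 hxF
        refine le_antisymm (iSup_le fun n => ?_) ?_
        · calc ENNReal.ofReal (distBCF Uᶜ n x) ≤ ENNReal.ofReal 1 :=
              ENNReal.ofReal_le_ofReal (min_le_left _ _)
            _ = 1 := ENNReal.ofReal_one
        · obtain ⟨n, hn⟩ := exists_nat_ge (1 / Metric.infDist x Uᶜ)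
          have h1 : (1 : ℝ) ≤ (n : ℝ) * Metric.infDist x Uᶜ := by
            rw [div_le_iff₀ hd] at hn
            linarith
          have : ENNReal.ofReal (distBCF Uᶜ n x) = 1 := by
            rw [distBCF_apply, min_eq_left h1, ENNReal.ofReal_one]
          calc (1 : ℝ≥0∞) = ENNReal.ofReal (distBCF Uᶜ n x) := this.symm
            _ ≤ ⨆ n : ℕ, ENNReal.ofReal (distBCF Uᶜ n x) :=
              le_iSup (fun n : ℕ => ENNReal.ofReal (distBCF Uᶜ n x)) n
      · rw [Set.indicator_of_notMem hx]
        have hxF : x ∈ Uᶜ := hx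
        have : ∀ n : ℕ, ENNReal.ofReal (distBCF Uᶜ n x) = 0 := by
          intro n
          simp [distBCF_apply, Metric.infDist_zero_of_mem hxF]
        simp [this]
    have key : (fun μ : FiniteMeasure X => (μ : Measure X) U)
        = fun μ : FiniteMeasure X =>
            ⨆ n : ℕ, ∫⁻ x, ENNReal.ofReal (distBCF Uᶜ n x) ∂(μ : Measure X) := by
      funext μ
      rw [← lintegral_iSup
        (fun n => ((distBCF Uᶜ n).continuous.measurable).ennreal_ofReal) hmono]
      simp_rw [hptw]
      rw [← lintegral_indicator_one hU.measurableSet]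
      rfl
    rw [key]
    exact Measurable.iSup fun n => measurable_lpairing _ (distBCF_nonneg _ n)

/-- Evaluation on any Borel set is Borel measurable w.r.t. `taub`. -/
lemma measurable_eval {B : Set X} (hB : MeasurableSet B) :
    Measurable[@borel (FiniteMeasure X) (taub X)]
      (fun μ : FiniteMeasure X => (μ : Measure X) B) := by
  refine MeasurableSpace.induction_on_inter
    (C := fun B _ => Measurable[@borel (FiniteMeasure X) (taub X)]
      (fun μ : FiniteMeasure X => (μ : Measure X) B))
    BorelSpace.measurable_eq isPiSystem_isOpen ?_ ?_ ?_ ?_ _ hB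
  · simpa using (measurable_const :
      Measurable[@borel (FiniteMeasure X) (taub X)] fun _ : FiniteMeasure X => (0 : ℝ≥0∞))
  · exact fun U hU => measurable_eval_open hU
  · intro t ht hCt
    have : (fun μ : FiniteMeasure X => (μ : Measure X) tᶜ)
          = fun μ : FiniteMeasure X =>
              (μ : Measure X) Set.univ - (μ : Measure X) t := by
        funext μ
        rw [measure_compl ht (measure_ne_top _ _)]
    rw [this]
    exact (measurable_eval_open isOpen_univ).sub hCt
  · intro f hdisj hmeas hC
    have : (fun μ : FiniteMeasure X => (μ : Measure X) (⋃ i, f i))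
        = fun μ : FiniteMeasure X => ∑' i, (μ : Measure X) (f i) := by
      funext μ
      exact measure_iUnion hdisj hmeas
    rw [this]
    exact Measurable.ennreal_tsum hC

/-- The coercion `FiniteMeasure X → Measure X` is measurable from `borel (taub X)` to the
canonical σ-algebra on measures. -/
lemma measurable_toMeasure :
    Measurable[@borel (FiniteMeasure X) (taub X)]
      (fun μ : FiniteMeasure X => (μ : Measure X)) := by
  letI : MeasurableSpace (FiniteMeasure X) := @borel (FiniteMeasure X) (taub X)
  exact Measure.measurable_of_measurable_coe _ fun _ hs => measurable_eval hs

end Aux18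

theorem stmt18 {X : Type*} [TopologicalSpace X] [PolishSpace X] [MeasurableSpace X] [BorelSpace X]
    (m : Measure X) [IsFiniteMeasureOnCompacts m] [m.InnerRegular]
    (E : Set (FiniteMeasure X))
    (hE : MeasurableSet[@borel (FiniteMeasure X) (taub X)] E) :
    Ct X ∞ m E ≤ AMmod 1 m E := by
  letI := TopologicalSpace.upgradeIsCompletelyMetrizable X
  letI mFM : MeasurableSpace (FiniteMeasure X) := @borel (FiniteMeasure X) (taub X)
  rw [Ct, AMmod]
  refine iSup_le fun η => iSup_le fun hη => le_iInf fun ρ => le_iInf fun hρ => ?_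
  obtain ⟨hfin, f, hf_meas, hbar, hnorm⟩ := hη
  obtain ⟨hlsc, hadm⟩ := hρ
  have hρmeas : ∀ j, Measurable (ρ j) := fun j => (hlsc j).measurable
  -- the density is a.e. bounded by 1
  have hf_le : f ≤ᵐ[m] fun _ => (1 : ℝ≥0∞) := by
    have h0 := ae_le_essSup (μ := m) f
    have h1 : essSup f m ≤ 1 := by simpa [lqNorm] using hnorm
    filter_upwards [h0] with x hx
    exact hx.trans h1
  -- the barycenter measure
  set ν : Measure X :=
    Measure.join (Measure.map (fun μ : FiniteMeasure X => (μ : Measure X)) η) with hν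
  have hν_apply : ∀ B : Set X, MeasurableSet B → ν B = ∫⁻ x in B, f x ∂m := by
    intro B hB
    rw [hν, Measure.join_apply hB,
      lintegral_map (Measure.measurable_coe hB) measurable_toMeasure]
    exact hbar B hB
  have hν_le : ν ≤ m := by
    refine Measure.le_iff.2 fun B hB => ?_
    rw [hν_apply B hB]
    calc ∫⁻ x in B, f x ∂m ≤ ∫⁻ _ in B, 1 ∂m :=
          lintegral_mono_ae (ae_restrict_of_ae hf_le)
      _ = m B := setLIntegral_one _
  -- measurability of the pairings with ρ j
  have hmj : ∀ j, Measurable (fun μ : FiniteMeasure X => ∫⁻ x, ρ j x ∂(μ : Measure X)) :=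
    fun j => (Measure.measurable_lintegral (hρmeas j)).comp measurable_toMeasure
  have step1 : η E ≤ ∫⁻ μ,
      Filter.liminf (fun j => ∫⁻ x, ρ j x ∂(μ : Measure X)) Filter.atTop ∂η := by
    calc η E = ∫⁻ _ in E, 1 ∂η := (setLIntegral_one _).symm
      _ ≤ ∫⁻ μ in E,
          Filter.liminf (fun j => ∫⁻ x, ρ j x ∂(μ : Measure X)) Filter.atTop ∂η :=
        lintegral_mono_ae ((ae_restrict_iff' hE).2 (Filter.Eventually.of_forall
          fun μ hμ => hadm μ hμ))
      _ ≤ _ := lintegral_mono' Measure.restrict_le_self le_rfl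
  have step2 : (∫⁻ μ, Filter.liminf
        (fun j => ∫⁻ x, ρ j x ∂(μ : Measure X)) Filter.atTop ∂η)
      ≤ Filter.liminf (fun j => ∫⁻ μ, ∫⁻ x, ρ j x ∂(μ : Measure X) ∂η) Filter.atTop :=
    lintegral_liminf_le hmj
  have step3 : ∀ j, (∫⁻ μ, ∫⁻ x, ρ j x ∂(μ : Measure X) ∂η) ≤ ∫⁻ x, ρ j x ∂m := by
    intro j
    have h1 : (∫⁻ μ, ∫⁻ x, ρ j x ∂(μ : Measure X) ∂η) = ∫⁻ x, ρ j x ∂ν := by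
      rw [hν, Measure.lintegral_join (hρmeas j).aemeasurable,
        lintegral_map (Measure.measurable_lintegral (hρmeas j)) measurable_toMeasure]
    rw [h1]
    exact lintegral_mono' hν_le le_rfl
  have step4 : Filter.liminf (fun j => ∫⁻ μ, ∫⁻ x, ρ j x ∂(μ : Measure X) ∂η) Filter.atTop
      ≤ Filter.liminf (fun j => ∫⁻ x, ρ j x ∂m) Filter.atTop :=
    Filter.liminf_le_liminf (Filter.Eventually.of_forall step3)
  simp_rw [ENNReal.rpow_one]
  exact step1.trans (step2.trans step4)

end AMPaper

end
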